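/- Let α be irrational with convergent denominators (q_k). If q_k^{1/k} → ∞, then α is singular on average: for every c > 0, the density of ℓ ∈ {1,…,N} for which the system ‖qα‖ ≤ c·2^{−ℓ}, 0 < q ≤ 2^ℓ has an integer solution tends to 1. -/

import Mathlib

open Filter MeasureTheory

/-- Distance from a real number to the nearest integer. -/
noncomputable def nint (x : ℝ) : ℝ := |x - round x|

/-- The denominator `q_k` of the `k`-th continued fraction convergent of `α`. -/
noncomputable def cfDen (α : ℝ) (k : ℕ) : ℝ := (GenContFract.of α).dens k

open scoped Classical

/-- `α` is singular on average: for every `c > 0`, the density of those `ℓ ∈ {1,…,N}`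
for which `‖qα‖ ≤ c·2^{-ℓ}` has a solution with `0 < q ≤ 2^ℓ` tends to `1`. -/
noncomputable def SingularOnAverage (α : ℝ) : Prop :=
  ∀ c : ℝ, 0 < c →
    Tendsto (fun N : ℕ =>
      (((Finset.Icc 1 N).filter (fun ℓ : ℕ =>
        ∃ q : ℕ, 0 < q ∧ q ≤ 2 ^ ℓ ∧ nint (q * α) ≤ c * 2 ^ (-(ℓ : ℤ)))).card : ℝ) / N)
      atTop (nhds 1)

open GenContFract
lemma nint_le_int (x : ℝ) (m : ℤ) : nint x ≤ |x - m| := by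
  rcases eq_or_ne m (round x) with rfl | h
  · simp [nint]
  · have hne : round x - m ≠ 0 := sub_ne_zero.2 (Ne.symm h)
    have h0 : (1:ℤ) ≤ |round x - m| := Int.one_le_abs hne
    have h1 : (1:ℝ) ≤ |(round x : ℝ) - (m:ℝ)| := by exact_mod_cast h0
    have h2 : |x - round x| ≤ 1/2 := abs_sub_round x
    have h3 : |(round x : ℝ) - (m:ℝ)| ≤ |(round x:ℝ) - x| + |x - (m:ℝ)| := abs_sub_le _ _ _
    have h4 : |(round x:ℝ) - x| = |x - round x| := abs_sub_comm _ _
    simp only [nint]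
    linarith

lemma notTerm (α : ℝ) (hα : Irrational α) (n : ℕ) : ¬(GenContFract.of α).TerminatedAt n := by
  intro h
  obtain ⟨q, hq⟩ := GenContFract.exists_rat_eq_of_terminates ⟨n, h⟩
  exact hα ⟨q, hq.symm⟩

lemma cf_ints (α : ℝ) (hα : Irrational α) (n : ℕ) :
    (∃ z : ℤ, (GenContFract.of α).nums n = z) ∧ (∃ z : ℤ, (GenContFract.of α).dens n = z) := by
  set g := GenContFract.of α with hg
  have key : ∀ n, ((∃ z : ℤ, g.nums n = z) ∧ (∃ z : ℤ, g.dens n = z)) ∧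
      ((∃ z : ℤ, g.nums (n+1) = z) ∧ (∃ z : ℤ, g.dens (n+1) = z)) := by
    intro n
    induction n with
    | zero =>
      obtain ⟨gp, hgp⟩ : ∃ gp, g.s.get? 0 = some gp :=
        Option.ne_none_iff_exists'.1 (notTerm α hα 0)
      have ha : gp.a = 1 := of_partNum_eq_one (partNum_eq_s_a hgp)
      obtain ⟨z, hz⟩ : ∃ z : ℤ, gp.b = (z : ℝ) :=
        (of_partNum_eq_one_and_exists_int_partDen_eq hgp).2
      refine ⟨⟨⟨⌊α⌋, ?_⟩, ⟨1, ?_⟩⟩, ⟨⟨z * ⌊α⌋ + 1, ?_⟩, ⟨z, ?_⟩⟩⟩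
      · rw [zeroth_num_eq_h, of_h_eq_floor]
      · rw [zeroth_den_eq_one]; norm_num
      · rw [first_num_eq hgp, ha, hz, of_h_eq_floor]; push_cast; ring
      · rw [first_den_eq hgp]; exact hz
    | succ n ih =>
      refine ⟨ih.2, ?_⟩
      obtain ⟨gp, hgp⟩ : ∃ gp, g.s.get? (n+1) = some gp :=
        Option.ne_none_iff_exists'.1 (notTerm α hα (n+1))
      have ha : gp.a = 1 := of_partNum_eq_one (partNum_eq_s_a hgp)
      obtain ⟨z, hz⟩ : ∃ z : ℤ, gp.b = (z : ℝ) :=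
        (of_partNum_eq_one_and_exists_int_partDen_eq hgp).2
      obtain ⟨⟨zA, hzA⟩, ⟨zB, hzB⟩⟩ := ih.1
      obtain ⟨⟨zA', hzA'⟩, ⟨zB', hzB'⟩⟩ := ih.2
      refine ⟨⟨z * zA' + zA, ?_⟩, ⟨z * zB' + zB, ?_⟩⟩
      · rw [nums_recurrence hgp hzA hzA', ha, hz]; push_cast; ring
      · rw [dens_recurrence hgp hzB hzB', ha, hz]; push_cast; ring
  exact (key n).1

lemma cfDen_one_le (α : ℝ) (hα : Irrational α) (n : ℕ) : 1 ≤ cfDen α n := by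
  have h := GenContFract.succ_nth_fib_le_of_nth_den (v := α) (n := n)
    (by cases n with
        | zero => exact Or.inl rfl
        | succ m => exact Or.inr (notTerm α hα m))
  calc (1:ℝ) ≤ (Nat.fib (n+1) : ℝ) := by exact_mod_cast Nat.fib_pos.2 (Nat.succ_pos n)
  _ ≤ cfDen α n := h

lemma cfDen_mono (α : ℝ) : Monotone (cfDen α) :=
  monotone_nat_of_le_succ fun n => GenContFract.of_den_mono

/-- the key approximation: a natural number q = dens n with good approximation -/
lemma exists_good_q (α : ℝ) (hα : Irrational α) (n : ℕ) :
    ∃ q : ℕ, 0 < q ∧ (q : ℝ) = cfDen α n ∧ nint (q * α) ≤ 1 / cfDen α (n+1) := by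
  obtain ⟨zA, hzA⟩ := (cf_ints α hα n).1
  obtain ⟨zB, hzB⟩ := (cf_ints α hα n).2
  have hzB : cfDen α n = zB := hzB
  have hB1 : (1:ℝ) ≤ cfDen α n := cfDen_one_le α hα n
  have hB1' : (1:ℝ) ≤ cfDen α (n+1) := cfDen_one_le α hα (n+1)
  have hBpos : (0:ℝ) < cfDen α n := lt_of_lt_of_le one_pos hB1
  have hzB1 : (1:ℤ) ≤ zB := by exact_mod_cast hzB ▸ hB1
  have hcast : ((zB.toNat : ℕ) : ℝ) = cfDen α n := by
    rw [show ((zB.toNat : ℕ) : ℝ) = ((zB.toNat : ℤ) : ℝ) by push_cast; ring,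
      Int.toNat_of_nonneg (by omega : (0:ℤ) ≤ zB)]
    exact hzB.symm
  refine ⟨zB.toNat, by omega, hcast, ?_⟩
  · rw [hcast]
    have habs : |α - (GenContFract.of α).convs n| ≤ 1 / (cfDen α n * cfDen α (n+1)) :=
      GenContFract.abs_sub_convs_le (notTerm α hα n)
    have hconv : (GenContFract.of α).convs n = zA / cfDen α n := by
      rw [GenContFract.conv_eq_num_div_den, hzA]; rfl
    have h1 : nint (cfDen α n * α) ≤ |cfDen α n * α - zA| := nint_le_int _ zA
    have h2 : |cfDen α n * α - zA| = cfDen α n * |α - (GenContFract.of α).convs n| := by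
      rw [hconv, show cfDen α n * α - (zA:ℝ) = cfDen α n * (α - zA / cfDen α n) by
        field_simp, abs_mul, abs_of_pos hBpos]
    calc nint (cfDen α n * α) ≤ cfDen α n * |α - (GenContFract.of α).convs n| := h2 ▸ h1
      _ ≤ cfDen α n * (1 / (cfDen α n * cfDen α (n+1))) :=
        mul_le_mul_of_nonneg_left habs hBpos.le
      _ = 1 / cfDen α (n+1) := by field_simp

lemma growth (α : ℝ) (hα : Irrational α)
    (hq : Tendsto (fun k : ℕ => cfDen α k ^ ((k : ℝ)⁻¹)) atTop atTop) (b : ℕ) :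
    ∃ k₀ : ℕ, 1 ≤ k₀ ∧ ∀ k, k₀ ≤ k → (2:ℝ) ^ (b * k) ≤ cfDen α k := by
  obtain ⟨k₁, hk₁⟩ := (tendsto_atTop.1 hq ((2:ℝ)^b)).exists_forall_of_atTop
  refine ⟨max k₁ 1, le_max_right _ _, fun k hk => ?_⟩
  have hk1 : 1 ≤ k := le_trans (le_max_right _ _) hk
  have h1 : (2:ℝ)^b ≤ cfDen α k ^ ((k:ℝ)⁻¹) := hk₁ k (le_trans (le_max_left _ _) hk)
  have hd0 : (0:ℝ) ≤ cfDen α k := le_trans zero_le_one (cfDen_one_le α hα k)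
  have key : (cfDen α k ^ ((k:ℝ)⁻¹)) ^ (k:ℕ) = cfDen α k :=
    Real.rpow_inv_natCast_pow hd0 (by omega)
  calc (2:ℝ) ^ (b * k) = ((2:ℝ)^b)^k := by rw [pow_mul]
    _ ≤ (cfDen α k ^ ((k:ℝ)⁻¹)) ^ (k:ℕ) :=
        pow_le_pow_left₀ (by positivity) h1 k
    _ = cfDen α k := key

theorem stmt8 (α : ℝ) (hα : Irrational α)
    (hq : Tendsto (fun k : ℕ => cfDen α k ^ ((k : ℝ)⁻¹)) atTop atTop) :
    SingularOnAverage α := by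
  intro c hc
  set P : ℕ → Prop := fun ℓ =>
    ∃ q : ℕ, 0 < q ∧ q ≤ 2 ^ ℓ ∧ nint (q * α) ≤ c * 2 ^ (-(ℓ : ℤ)) with hP
  rw [Metric.tendsto_atTop]
  intro ε hε
  -- constants
  obtain ⟨M, hM1, hMbig⟩ : ∃ M : ℕ, 1 ≤ M ∧ c⁻¹ < (2:ℝ) ^ M := by
    refine ⟨⌈Real.logb 2 c⁻¹⌉₊ + 1, Nat.le_add_left 1 _, ?_⟩
    set M : ℕ := ⌈Real.logb 2 c⁻¹⌉₊ + 1 with hM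
    rcases le_or_gt c⁻¹ 1 with h | h
    · exact lt_of_le_of_lt h (one_lt_pow₀ one_lt_two (by omega))
    · have h0 : c⁻¹ = (2:ℝ) ^ Real.logb 2 c⁻¹ := (Real.rpow_logb two_pos (by norm_num) (by positivity)).symm
      have h1 : Real.logb 2 c⁻¹ < (M:ℝ) := by
        have : (⌈Real.logb 2 c⁻¹⌉₊ : ℝ) < M := by exact_mod_cast Nat.lt_succ_self _
        linarith [Nat.le_ceil (Real.logb 2 c⁻¹)]
      calc c⁻¹ = (2:ℝ) ^ Real.logb 2 c⁻¹ := h0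
        _ < (2:ℝ) ^ (M:ℝ) := Real.rpow_lt_rpow_left_iff one_lt_two |>.2 h1
        _ = (2:ℝ) ^ M := by rw [Real.rpow_natCast]
  obtain ⟨b, hb1, hbε⟩ : ∃ b : ℕ, 1 ≤ b ∧ (M:ℝ) / b ≤ ε / 2 := by
    refine ⟨⌈(M:ℝ) * 2 / ε⌉₊ + 1, Nat.le_add_left 1 _, ?_⟩
    rw [div_le_div_iff₀ (by positivity) (by norm_num)]
    have h1 : (M:ℝ) * 2 / ε ≤ ((⌈(M:ℝ) * 2 / ε⌉₊ + 1 : ℕ) : ℝ) := by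
      refine le_trans (Nat.le_ceil _) ?_
      push_cast
      linarith
    rw [div_le_iff₀ hε] at h1
    linarith
  obtain ⟨k₀, hk₀1, hk₀⟩ := growth α hα hq b
  -- the index function
  set kk : ℕ → ℕ := fun ℓ => Nat.findGreatest (fun j => cfDen α j ≤ 2 ^ ℓ) (k₀ + ℓ) with hkk
  have hkk_le : ∀ ℓ, cfDen α (kk ℓ) ≤ 2 ^ ℓ := by
    intro ℓ
    have h0 : cfDen α 0 ≤ 2 ^ ℓ := by
      rw [show cfDen α 0 = 1 from GenContFract.zeroth_den_eq_one]
      exact one_le_pow₀ one_le_two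
    exact Nat.findGreatest_spec (P := fun j => cfDen α j ≤ 2 ^ ℓ) (Nat.zero_le (k₀ + ℓ)) h0
  have hkk_lt : ∀ ℓ, kk ℓ < k₀ + ℓ := by
    intro ℓ
    have hfail : ¬ (cfDen α (k₀ + ℓ) ≤ 2 ^ ℓ) := by
      push_neg
      calc (2:ℝ) ^ ℓ < 2 ^ (b * (k₀ + ℓ)) := by
            apply pow_lt_pow_right₀ one_lt_two
            calc ℓ < k₀ + ℓ := by omega
              _ ≤ b * (k₀ + ℓ) := Nat.le_mul_of_pos_left _ (by omega)
        _ ≤ cfDen α (k₀ + ℓ) := hk₀ _ (by omega)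
    have hle : kk ℓ ≤ k₀ + ℓ := Nat.findGreatest_le _
    rcases lt_or_eq_of_le hle with h | h
    · exact h
    · exact absurd (h ▸ hkk_le ℓ) hfail
  have hkk_gt : ∀ ℓ, (2:ℝ) ^ ℓ < cfDen α (kk ℓ + 1) := by
    intro ℓ
    have := Nat.findGreatest_is_greatest (P := fun j => cfDen α j ≤ 2 ^ ℓ) (n := k₀ + ℓ)
      (Nat.lt_succ_self (kk ℓ)) (by have := hkk_lt ℓ; omega)
    exact lt_of_not_ge this
  -- bad ℓ gives the window condition
  have hbad_window : ∀ ℓ, ¬ P ℓ → c * cfDen α (kk ℓ + 1) < 2 ^ ℓ := by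
    intro ℓ hbad
    by_contra hcon
    push_neg at hcon
    apply hbad
    obtain ⟨q, hq0, hqeq, hqap⟩ := exists_good_q α hα (kk ℓ)
    refine ⟨q, hq0, ?_, ?_⟩
    · have : (q:ℝ) ≤ ((2^ℓ : ℕ) : ℝ) := by rw [hqeq]; push_cast; exact hkk_le ℓ
      exact_mod_cast this
    · have hd1 : (0:ℝ) < cfDen α (kk ℓ + 1) := lt_of_lt_of_le one_pos (cfDen_one_le α hα _)
      have h2 : (2:ℝ) ^ (-(ℓ:ℤ)) = ((2:ℝ)^ℓ)⁻¹ := by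
        rw [zpow_neg, zpow_natCast]
      rw [h2]
      calc nint (q * α) ≤ 1 / cfDen α (kk ℓ + 1) := hqap
        _ ≤ c * ((2:ℝ)^ℓ)⁻¹ := by
            have hp : (0:ℝ) < (2:ℝ)^ℓ := by positivity
            rw [div_le_iff₀ hd1, show c * ((2:ℝ)^ℓ)⁻¹ * cfDen α (kk ℓ + 1)
                = c * cfDen α (kk ℓ + 1) / (2:ℝ)^ℓ from by ring]
            exact (one_le_div hp).2 hcon
  -- bound on kk
  have hkk_bound : ∀ N ℓ : ℕ, ℓ ≤ N → kk ℓ ≤ k₀ + N / b := by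
    intro N ℓ hℓ
    rcases lt_or_ge (kk ℓ) k₀ with h | h
    · exact le_trans h.le (Nat.le_add_right _ _)
    · have h1 : (2:ℝ) ^ (b * kk ℓ) ≤ cfDen α (kk ℓ) := hk₀ _ h
      have h2 : cfDen α (kk ℓ) ≤ 2 ^ ℓ := hkk_le ℓ
      have h3 : (2:ℝ) ^ ℓ ≤ 2 ^ N := pow_le_pow_right₀ one_le_two hℓ
      have h4 : b * kk ℓ ≤ N := by
        by_contra hcon
        push_neg at hcon
        have : (2:ℝ) ^ N < 2 ^ (b * kk ℓ) := pow_lt_pow_right₀ one_lt_two hcon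
        linarith
      have h5 : kk ℓ ≤ N / b := (Nat.le_div_iff_mul_le (by omega : 0 < b)).2
        (by rw [Nat.mul_comm]; exact h4)
      omega
  set N₀ : ℕ := max 1 (⌈(M:ℝ) * (k₀ + 1) * 2 / ε⌉₊ + 1) with hN₀
  refine ⟨N₀, fun N hN => ?_⟩
  have hN1 : 1 ≤ N := le_trans (le_max_left _ _) hN
  have hNpos : (0:ℝ) < N := by exact_mod_cast hN1
  set good := (Finset.Icc 1 N).filter P with hgood
  set bad := (Finset.Icc 1 N).filter (fun ℓ => ¬ P ℓ) with hbad
  have hsum : good.card + bad.card = N := by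
    rw [hgood, hbad, Finset.card_filter_add_card_filter_not]
    simp [Nat.card_Icc]
  -- fiber bound
  have hfiber : ∀ j ∈ bad.image kk, (bad.filter (fun ℓ => kk ℓ = j)).card ≤ M := by
    intro j _
    set t := bad.filter (fun ℓ => kk ℓ = j) with ht
    rcases t.eq_empty_or_nonempty with he | hne
    · simp [he]
    · set a := t.min' hne with ha
      have hat : a ∈ t := t.min'_mem hne
      have hsub : t ⊆ Finset.Icc a (a + (M - 1)) := by
        intro x hx
        rw [Finset.mem_Icc]
        refine ⟨Finset.min'_le t x hx, ?_⟩
        have hka : kk a = j := (Finset.mem_filter.1 hat).2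
        have hkx : kk x = j := (Finset.mem_filter.1 hx).2
        have hbada : ¬ P a := (Finset.mem_filter.1 (Finset.mem_filter.1 hat).1).2
        have hwa : c * cfDen α (j + 1) < 2 ^ a := hka ▸ hbad_window a hbada
        have hgx : (2:ℝ) ^ x < cfDen α (j + 1) := hkx ▸ hkk_gt x
        by_contra hcon
        push_neg at hcon
        have hxa : a + M ≤ x := by omega
        have h5 : (2:ℝ) ^ (a + M) ≤ 2 ^ x := pow_le_pow_right₀ one_le_two hxa
        have h6 : (2:ℝ) ^ (a + M) = 2 ^ a * 2 ^ M := pow_add 2 a M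
        have hpa : (0:ℝ) < 2 ^ a := by positivity
        have h7 : c * (2:ℝ) ^ x < 2 ^ a :=
          lt_trans (mul_lt_mul_of_pos_left hgx hc) hwa
        have h8 : (1:ℝ) < c * 2 ^ M := by
          have h9 := hMbig
          rw [inv_eq_one_div, div_lt_iff₀ hc] at h9
          nlinarith [h9]
        nlinarith
      calc t.card ≤ (Finset.Icc a (a + (M - 1))).card := Finset.card_le_card hsub
        _ = M := by rw [Nat.card_Icc]; omega
  have himg : (bad.image kk).card ≤ k₀ + N / b + 1 := by
    have hss : bad.image kk ⊆ Finset.range (k₀ + N / b + 1) := by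
      intro j hj
      rw [Finset.mem_image] at hj
      obtain ⟨ℓ, hℓ, rfl⟩ := hj
      rw [Finset.mem_range]
      have hℓN : ℓ ≤ N := (Finset.mem_Icc.1 (Finset.mem_filter.1 hℓ).1).2
      have := hkk_bound N ℓ hℓN
      omega
    calc (bad.image kk).card ≤ (Finset.range (k₀ + N / b + 1)).card :=
          Finset.card_le_card hss
      _ = k₀ + N / b + 1 := Finset.card_range _
  have hbadcard : bad.card ≤ M * (k₀ + N / b + 1) :=
    le_trans (Finset.card_le_mul_card_image bad M hfiber) (Nat.mul_le_mul_left M himg)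
  -- final arithmetic
  have hgoodN : good.card ≤ N := by omega
  have hsumR : (good.card : ℝ) + bad.card = N := by exact_mod_cast hsum
  have hdist : dist ((good.card : ℝ) / N) 1 = (bad.card : ℝ) / N := by
    rw [Real.dist_eq,
      show (good.card : ℝ) / N - 1 = -((bad.card : ℝ) / N) by field_simp; linarith,
      abs_neg, abs_of_nonneg (by positivity)]
  rw [hdist]
  have hdivb : ((N / b : ℕ) : ℝ) ≤ (N : ℝ) / b := Nat.cast_div_le
  have hbR : (0:ℝ) < b := by exact_mod_cast hb1
  have step1 : (bad.card : ℝ) ≤ M * (k₀ + 1) + (M : ℝ) * ((N:ℝ) / b) := by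
    have h1 : (bad.card : ℝ) ≤ (M : ℝ) * ((k₀ : ℝ) + ((N / b : ℕ) : ℝ) + 1) := by
      exact_mod_cast hbadcard
    have h2 : (M:ℝ) * ((k₀ : ℝ) + ((N / b : ℕ) : ℝ) + 1)
        ≤ (M:ℝ) * ((k₀:ℝ) + (N:ℝ)/b + 1) := by
      exact mul_le_mul_of_nonneg_left (by linarith) (Nat.cast_nonneg M)
    have h3 : (M:ℝ) * ((k₀:ℝ) + (N:ℝ)/b + 1) = M * (k₀ + 1) + (M:ℝ) * ((N:ℝ)/b) := by
      push_cast; ring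
    linarith
  have hA : (M:ℝ) * ((N:ℝ)/b) ≤ ε/2 * N := by
    have h0 := mul_le_mul_of_nonneg_right hbε (le_of_lt hNpos)
    calc (M:ℝ) * ((N:ℝ)/b) = (M:ℝ)/b * N := by ring
      _ ≤ ε/2 * N := h0
  have hB : (M:ℝ) * ((k₀:ℝ) + 1) < ε/2 * N := by
    have hN2 : (⌈(M:ℝ) * (k₀ + 1) * 2 / ε⌉₊ + 1 : ℕ) ≤ N := le_trans (le_max_right _ _) hN
    have hNR : (M:ℝ) * ((k₀:ℝ) + 1) * 2 / ε < N := by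
      have h1 : (M:ℝ) * (k₀ + 1) * 2 / ε ≤ (⌈(M:ℝ) * (k₀ + 1) * 2 / ε⌉₊ : ℝ) := Nat.le_ceil _
      have h2 : ((⌈(M:ℝ) * (k₀ + 1) * 2 / ε⌉₊ : ℕ) : ℝ) < N := by exact_mod_cast hN2
      push_cast at h2
      linarith
    rw [div_lt_iff₀ hε] at hNR
    linarith
  rw [div_lt_iff₀ hNpos]
  have step1' : (bad.card : ℝ) ≤ (M:ℝ) * ((k₀:ℝ) + 1) + (M : ℝ) * ((N:ℝ) / b) := by
    push_cast at step1
    linarith [step1]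
  linarith [step1', hA, hB]
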